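/- Characterization of fair degenerate words over a binary alphabet: if A ≠ B are words of length ℓ ≥ 2 in {H,T} with 1 + θ_{AA} − θ_{AB} − θ_{BA} + θ_{BB} = 0, then up to swapping A with B and swapping H with T, one has A = H T^{ℓ−1} and B = T^{ℓ−1} H. -/

import Mathlib

/-- The length-`k` suffix of `U` equals the length-`k` prefix of `V`. -/
def OverlapAt {A : Type*} (ℓ k : ℕ) (U V : Fin ℓ → A) : Prop :=
  ∀ (i : ℕ) (_ : i < k) (h : ℓ - k + i < ℓ), U ⟨ℓ - k + i, h⟩ = V ⟨i, by omega⟩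

open Classical in
/-- The overlap index `θ_{UV} = ∑_{k ∈ Θ(U,V)} q^{k-ℓ}`. -/
noncomputable def theta {A : Type*} (q ℓ : ℕ) (U V : Fin ℓ → A) : ℝ :=
  ∑ k ∈ Finset.Ico 1 ℓ, if OverlapAt ℓ k U V then (q : ℝ) ^ ((k : ℤ) - ℓ) else 0

namespace Statement17Aux

open Finset

lemma finA {ℓ : ℕ} (A : Fin ℓ → Bool) {x y : ℕ} (hx : x < ℓ) (hy : y < ℓ) (h : x = y) :
    A ⟨x, hx⟩ = A ⟨y, hy⟩ := by subst h; rfl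

/-- Composition of overlaps. -/
lemma comp {ℓ k m t : ℕ} {U V W : Fin ℓ → Bool} (hk : k < ℓ) (hm : m < ℓ)
    (ht : k + m = ℓ + t)
    (h1 : OverlapAt ℓ k U V) (h2 : OverlapAt ℓ m W U) : OverlapAt ℓ t W V := by
  intro i hi hlt
  have hiU : ℓ - k + i < ℓ := by omega
  have h2' := h2 (ℓ - k + i) (by omega) (by omega)
  have h1' := h1 i (by omega) hiU
  calc W ⟨ℓ - t + i, hlt⟩ = W ⟨ℓ - m + (ℓ - k + i), by omega⟩ := finA W _ _ (by omega)
    _ = U ⟨ℓ - k + i, hiU⟩ := h2'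
    _ = V ⟨i, by omega⟩ := h1'

open Classical in
noncomputable def ov (ℓ k : ℕ) (U V : Fin ℓ → Bool) : ℕ :=
  if OverlapAt ℓ k U V then 2 ^ k else 0

lemma ov_le (ℓ k : ℕ) (U V : Fin ℓ → Bool) : ov ℓ k U V ≤ 2 ^ k := by
  unfold ov; split
  · exact le_rfl
  · exact Nat.zero_le _

lemma ov_pos (ℓ k : ℕ) (U V : Fin ℓ → Bool) : 0 < 2 ^ k := Nat.pow_pos (by norm_num)

lemma overlap_of_ov {ℓ k : ℕ} {U V : Fin ℓ → Bool} (h : 2 ^ k ≤ ov ℓ k U V) :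
    OverlapAt ℓ k U V := by
  by_contra hc
  rw [ov, if_neg hc] at h
  have := (Nat.pow_pos (show 0 < 2 by norm_num) : 0 < 2 ^ k)
  omega

lemma geom {n : ℕ} (hn : 1 ≤ n) : (∑ k ∈ Ico 1 n, (2:ℕ) ^ k) + 2 = 2 ^ n := by
  induction n, hn using Nat.le_induction with
  | base => simp
  | succ n hn ih =>
      rw [Finset.sum_Ico_succ_top hn, pow_succ]
      omega

lemma sum_ov_le {ℓ n : ℕ} (hn : 1 ≤ n) (U V : Fin ℓ → Bool) :
    (∑ k ∈ Ico 1 n, ov ℓ k U V) + 2 ≤ 2 ^ n := by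
  have h1 : ∑ k ∈ Ico 1 n, ov ℓ k U V ≤ ∑ k ∈ Ico 1 n, (2:ℕ) ^ k :=
    Finset.sum_le_sum fun k _ => ov_le ℓ k U V
  have := geom hn
  omega

lemma all_of_sum {ℓ n : ℕ} (hn : 1 ≤ n) (U V : Fin ℓ → Bool)
    (h : (∑ k ∈ Ico 1 n, ov ℓ k U V) + 2 = 2 ^ n) :
    ∀ k, 1 ≤ k → k < n → OverlapAt ℓ k U V := by
  have hle : ∀ k ∈ Ico 1 n, ov ℓ k U V ≤ 2 ^ k := fun k _ => ov_le ℓ k U V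
  have hsum : ∑ k ∈ Ico 1 n, ov ℓ k U V = ∑ k ∈ Ico 1 n, (2:ℕ) ^ k := by
    have := geom hn; omega
  have hall := (Finset.sum_eq_sum_iff_of_le hle).mp hsum
  intro k h1 h2
  have := hall k (Finset.mem_Ico.mpr ⟨h1, h2⟩)
  exact overlap_of_ov (le_of_eq this.symm)

lemma theta_eq (ℓ : ℕ) (U V : Fin ℓ → Bool) :
    theta 2 ℓ U V = ((∑ k ∈ Finset.Ico 1 ℓ, ov ℓ k U V : ℕ) : ℝ) / 2 ^ ℓ := by
  unfold theta
  rw [Nat.cast_sum, Finset.sum_div]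
  refine Finset.sum_congr rfl fun k hk => ?_
  unfold ov
  rw [apply_ite (Nat.cast : ℕ → ℝ)]
  split_ifs with hP
  · push_cast
    rw [zpow_sub₀ (by norm_num : (2:ℝ) ≠ 0), zpow_natCast, zpow_natCast]
  · simp

/-- The final structural step: from the derived pointwise facts, produce the
normal form of the pair. -/
lemma final (n : ℕ) (hn : 1 ≤ n) (A B : Fin (n+1) → Bool) (hAB : A ≠ B)
    (hP1 : ∀ j (h1 : 1 ≤ j) (hj : j < n + 1), A ⟨j, hj⟩ = A ⟨1, by omega⟩)
    (hP2 : ∀ i (hi : i < n), B ⟨i, by omega⟩ = A ⟨1, by omega⟩)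
    (hP3 : B ⟨n, by omega⟩ = A ⟨0, by omega⟩) :
    ((A = fun i : Fin (n+1) => decide ((i : ℕ) ≠ 0)) ∧
      (B = fun i : Fin (n+1) => decide ((i : ℕ) ≠ n))) ∨
    ((A = fun i : Fin (n+1) => decide ((i : ℕ) = 0)) ∧
      (B = fun i : Fin (n+1) => decide ((i : ℕ) = n))) := by
  have h01 : (0:ℕ) < n + 1 := by omega
  have h11 : (1:ℕ) < n + 1 := by omega
  have hne : A ⟨0, h01⟩ ≠ A ⟨1, h11⟩ := by
    intro hcontra
    apply hAB
    funext i
    rcases i with ⟨j, hj⟩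
    have hA : A ⟨j, hj⟩ = A ⟨1, h11⟩ := by
      rcases Nat.eq_zero_or_pos j with h | h
      · subst h; exact hcontra
      · exact hP1 j h hj
    have hB : B ⟨j, hj⟩ = A ⟨1, h11⟩ := by
      by_cases hjn : j < n
      · exact hP2 j hjn
      · have hjn' : j = n := by omega
        calc B ⟨j, hj⟩ = B ⟨n, by omega⟩ := finA B _ _ hjn'
          _ = A ⟨0, h01⟩ := hP3
          _ = A ⟨1, h11⟩ := hcontra
    rw [hA, hB]
  cases hA0 : A ⟨0, h01⟩ with
  | false =>
      have hA1 : A ⟨1, h11⟩ = true := by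
        cases hA1 : A ⟨1, h11⟩ with
        | true => rfl
        | false => exact absurd (hA0.trans hA1.symm) hne
      left
      constructor
      · funext i
        rcases i with ⟨j, hj⟩
        show A ⟨j, hj⟩ = decide (j ≠ 0)
        rcases Nat.eq_zero_or_pos j with h | h
        · subst h; simpa using hA0
        · rw [hP1 j h hj, hA1]
          simp; omega
      · funext i
        rcases i with ⟨j, hj⟩
        show B ⟨j, hj⟩ = decide (j ≠ n)
        by_cases hjn : j < n
        · rw [hP2 j hjn, hA1]
          simp; omega
        · have hjn' : j = n := by omega
          rw [finA B hj (by omega) hjn', hP3, hA0]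
          simp [hjn']
  | true =>
      have hA1 : A ⟨1, h11⟩ = false := by
        cases hA1 : A ⟨1, h11⟩ with
        | false => rfl
        | true => exact absurd (hA0.trans hA1.symm) hne
      right
      constructor
      · funext i
        rcases i with ⟨j, hj⟩
        show A ⟨j, hj⟩ = decide (j = 0)
        rcases Nat.eq_zero_or_pos j with h | h
        · subst h; simpa using hA0
        · rw [hP1 j h hj, hA1]
          simp; omega
      · funext i
        rcases i with ⟨j, hj⟩
        show B ⟨j, hj⟩ = decide (j = n)
        by_cases hjn : j < n
        · rw [hP2 j hjn, hA1]
          simp; omega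
        · have hjn' : j = n := by omega
          rw [finA B hj (by omega) hjn', hP3, hA0]
          simp [hjn']

/-- Pointwise consequence of the top overlap `Θ(A,B) ∋ ℓ-1`. -/
lemma top_pointwise {n : ℕ} {A B : Fin (n+1) → Bool} (hET : OverlapAt (n+1) n A B) :
    ∀ i (hi : i < n), A ⟨i + 1, by omega⟩ = B ⟨i, by omega⟩ := by
  intro i hi
  have h := hET i hi (by omega)
  calc A ⟨i + 1, by omega⟩ = A ⟨n + 1 - n + i, by omega⟩ := finA A _ _ (by omega)
    _ = B ⟨i, by omega⟩ := h

/-- From all overlaps `Θ(A,B) ⊇ {1,…,ℓ-1}` (top included) build `P1`. -/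
lemma chainP1 {n : ℕ} (hn : 2 ≤ n) {A B : Fin (n+1) → Bool}
    (hET : OverlapAt (n+1) n A B)
    (hEn1 : OverlapAt (n+1) (n-1) A B) :
    ∀ j (h1 : 1 ≤ j) (hj : j < n + 1), A ⟨j, hj⟩ = A ⟨1, by omega⟩ := by
  have hE := top_pointwise hET
  have hstep : ∀ i (hi : i < n - 1), A ⟨i + 2, by omega⟩ = A ⟨i + 1, by omega⟩ := by
    intro i hi
    have h := hEn1 i hi (by omega)
    have h2 : A ⟨i + 2, by omega⟩ = B ⟨i, by omega⟩ := by
      calc A ⟨i + 2, by omega⟩ = A ⟨n + 1 - (n - 1) + i, by omega⟩ := finA A _ _ (by omega)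
        _ = B ⟨i, by omega⟩ := h
    rw [h2, ← hE i (by omega)]
  have key : ∀ d (h : 1 + d < n + 1), A ⟨1 + d, h⟩ = A ⟨1, by omega⟩ := by
    intro d
    induction d with
    | zero => intro h; rfl
    | succ m ih =>
        intro h
        have h1 : A ⟨1 + (m + 1), h⟩ = A ⟨m + 2, by omega⟩ := finA A _ _ (by omega)
        rw [h1, hstep m (by omega)]
        have h2 : A ⟨m + 1, by omega⟩ = A ⟨1 + m, by omega⟩ := finA A _ _ (by omega)
        rw [h2, ih (by omega)]
  intro j h1 hj
  calc A ⟨j, hj⟩ = A ⟨1 + (j - 1), by omega⟩ := finA A _ _ (by omega)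
    _ = A ⟨1, by omega⟩ := key (j - 1) (by omega)

/-- Case II: top overlap for (A,B) but not for (B,A). -/
lemma caseII (n : ℕ) (hn : 1 ≤ n) (A B : Fin (n+1) → Bool) (hAB : A ≠ B)
    (hstar : (∑ k ∈ Ico 1 (n+1), ov (n+1) k A B) + (∑ k ∈ Ico 1 (n+1), ov (n+1) k B A)
        = 2 ^ (n+1) + (∑ k ∈ Ico 1 (n+1), ov (n+1) k A A) + (∑ k ∈ Ico 1 (n+1), ov (n+1) k B B))
    (hET : OverlapAt (n+1) n A B) (hFT : ¬ OverlapAt (n+1) n B A) :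
    ((A = fun i : Fin (n+1) => decide ((i : ℕ) ≠ 0)) ∧
      (B = fun i : Fin (n+1) => decide ((i : ℕ) ≠ n))) ∨
    ((A = fun i : Fin (n+1) => decide ((i : ℕ) = 0)) ∧
      (B = fun i : Fin (n+1) => decide ((i : ℕ) = n))) := by
  -- split off top terms
  rw [Finset.sum_Ico_succ_top hn, Finset.sum_Ico_succ_top hn,
    Finset.sum_Ico_succ_top hn, Finset.sum_Ico_succ_top hn] at hstar
  rw [show ov (n+1) n A B = 2 ^ n from if_pos hET,
    show ov (n+1) n B A = 0 from if_neg hFT] at hstar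
  have hpow : (2:ℕ) ^ (n+1) = 2 * 2 ^ n := by rw [pow_succ]; ring
  -- rule out n = 1
  have hn2 : 2 ≤ n := by
    by_contra hc
    have hn1 : n = 1 := by omega
    subst hn1
    simp only [Finset.Ico_self, Finset.sum_empty] at hstar
    have h1 := ov_le (1+1) 1 A A
    have h2 := ov_le (1+1) 1 B B
    norm_num at hstar h1 h2
    omega
  -- split off bottom of the (B,A) sum
  rw [Finset.sum_eq_sum_Ico_succ_bot (show 1 < n by omega) (fun k => ov (n+1) k B A)] at hstar
  simp only [Nat.reduceAdd] at hstar
  -- reindex and bound the remaining (B,A) sum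
  have hre : ∑ k ∈ Ico 2 n, ov (n+1) k B A = ∑ k ∈ Ico 1 (n-1), ov (n+1) (k+1) B A := by
    have h := Finset.sum_Ico_add' (fun k => ov (n+1) k B A) 1 (n-1) 1
    rw [h]
    all_goals (congr 1 <;> omega)
  have htw : ∀ k ∈ Ico 1 (n-1), ov (n+1) (k+1) B A ≤ ov (n+1) k A A + ov (n+1) k B B := by
    intro k hk
    rw [Finset.mem_Ico] at hk
    by_cases hf : OverlapAt (n+1) (k+1) B A
    · have hc : OverlapAt (n+1) k A A :=
        comp (by omega) (by omega) (show (k+1) + n = (n+1) + k by omega) hf hET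
      have hd : OverlapAt (n+1) k B B :=
        comp (by omega) (by omega) (show n + (k+1) = (n+1) + k by omega) hET hf
      rw [show ov (n+1) (k+1) B A = 2 ^ (k+1) from if_pos hf,
        show ov (n+1) k A A = 2 ^ k from if_pos hc,
        show ov (n+1) k B B = 2 ^ k from if_pos hd, pow_succ]
      omega
    · rw [show ov (n+1) (k+1) B A = 0 from if_neg hf]
      exact Nat.zero_le _
  have hbd : ∑ k ∈ Ico 2 n, ov (n+1) k B A
      ≤ (∑ k ∈ Ico 1 n, ov (n+1) k A A) + (∑ k ∈ Ico 1 n, ov (n+1) k B B) := by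
    rw [hre]
    calc ∑ k ∈ Ico 1 (n-1), ov (n+1) (k+1) B A
        ≤ ∑ k ∈ Ico 1 (n-1), (ov (n+1) k A A + ov (n+1) k B B) := Finset.sum_le_sum htw
      _ ≤ ∑ k ∈ Ico 1 n, (ov (n+1) k A A + ov (n+1) k B B) :=
          Finset.sum_le_sum_of_subset (Finset.Ico_subset_Ico le_rfl (by omega))
      _ = _ := Finset.sum_add_distrib
  have hSE := sum_ov_le (ℓ := n+1) hn A B
  have hF1 : ov (n+1) 1 B A ≤ 2 := by have := ov_le (n+1) 1 B A; simpa using this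
  have hCtop := ov_le (n+1) n A A
  have hDtop := ov_le (n+1) n B B
  -- extract equalities
  have hSEeq : (∑ k ∈ Ico 1 n, ov (n+1) k A B) + 2 = 2 ^ n := by omega
  have hF1eq : ov (n+1) 1 B A = 2 := by omega
  have he_all := all_of_sum hn A B hSEeq
  have hf1 : OverlapAt (n+1) 1 B A := overlap_of_ov (by omega)
  -- word structure
  have hE := top_pointwise hET
  have hP1 := chainP1 hn2 hET (he_all (n-1) (by omega) (by omega))
  have hP2 : ∀ i (hi : i < n), B ⟨i, by omega⟩ = A ⟨1, by omega⟩ := by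
    intro i hi
    rw [← hE i hi]
    exact hP1 (i+1) (by omega) (by omega)
  have hP3 : B ⟨n, by omega⟩ = A ⟨0, by omega⟩ := by
    have h := hf1 0 (by omega) (by omega)
    calc B ⟨n, by omega⟩ = B ⟨n + 1 - 1 + 0, by omega⟩ := finA B _ _ (by omega)
      _ = A ⟨0, by omega⟩ := h
  exact final n hn A B hAB hP1 hP2 hP3

/-- Case I: top overlaps in both directions. -/
lemma caseI (n : ℕ) (hn : 1 ≤ n) (A B : Fin (n+1) → Bool) (hAB : A ≠ B)
    (hstar : (∑ k ∈ Ico 1 (n+1), ov (n+1) k A B) + (∑ k ∈ Ico 1 (n+1), ov (n+1) k B A)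
        = 2 ^ (n+1) + (∑ k ∈ Ico 1 (n+1), ov (n+1) k A A) + (∑ k ∈ Ico 1 (n+1), ov (n+1) k B B))
    (hET : OverlapAt (n+1) n A B) (hFT : OverlapAt (n+1) n B A) :
    ((A = fun i : Fin (n+1) => decide ((i : ℕ) ≠ 0)) ∧
      (B = fun i : Fin (n+1) => decide ((i : ℕ) ≠ n))) ∨
    ((A = fun i : Fin (n+1) => decide ((i : ℕ) = 0)) ∧
      (B = fun i : Fin (n+1) => decide ((i : ℕ) = n))) := by
  have hE := top_pointwise hET
  have hF := top_pointwise hFT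
  rcases Nat.lt_or_ge n 2 with hn2 | hn2
  · -- n = 1 : conclude directly
    have hn1 : n = 1 := by omega
    subst hn1
    refine final 1 le_rfl A B hAB ?_ ?_ ?_
    · intro j h1 hj
      exact finA A _ _ (by omega)
    · intro i hi
      have hi0 : i = 0 := by omega
      subst hi0
      exact (hE 0 (by omega)).symm
    · exact hF 0 (by omega)
  · -- n ≥ 2 : derive a contradiction
    exfalso
    -- split top terms
    rw [Finset.sum_Ico_succ_top hn, Finset.sum_Ico_succ_top hn,
      Finset.sum_Ico_succ_top hn, Finset.sum_Ico_succ_top hn] at hstar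
    rw [show ov (n+1) n A B = 2 ^ n from if_pos hET,
      show ov (n+1) n B A = 2 ^ n from if_pos hFT] at hstar
    have hpow : (2:ℕ) ^ (n+1) = 2 * 2 ^ n := by rw [pow_succ]; ring
    -- termwise bound
    have htw : ∀ k ∈ Ico 1 n,
        ov (n+1) (k+1) A B + ov (n+1) (k+1) B A
          ≤ 2 * (ov (n+1) k A A + ov (n+1) k B B) := by
      intro k hk
      rw [Finset.mem_Ico] at hk
      have b1 : ov (n+1) (k+1) A B ≤ 2 * ov (n+1) k A A := by
        by_cases he : OverlapAt (n+1) (k+1) A B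
        · have hc : OverlapAt (n+1) k A A :=
            comp (by omega) (by omega) (show n + (k+1) = (n+1) + k by omega) hFT he
          rw [show ov (n+1) (k+1) A B = 2 ^ (k+1) from if_pos he,
            show ov (n+1) k A A = 2 ^ k from if_pos hc, pow_succ]
          omega
        · rw [show ov (n+1) (k+1) A B = 0 from if_neg he]
          exact Nat.zero_le _
      have b2 : ov (n+1) (k+1) B A ≤ 2 * ov (n+1) k B B := by
        by_cases he : OverlapAt (n+1) (k+1) B A
        · have hd : OverlapAt (n+1) k B B :=
            comp (by omega) (by omega) (show n + (k+1) = (n+1) + k by omega) hET he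
          rw [show ov (n+1) (k+1) B A = 2 ^ (k+1) from if_pos he,
            show ov (n+1) k B B = 2 ^ k from if_pos hd, pow_succ]
          omega
        · rw [show ov (n+1) (k+1) B A = 0 from if_neg he]
          exact Nat.zero_le _
      omega
    have hsum2 : ∑ k ∈ Ico 1 n, (ov (n+1) (k+1) A B + ov (n+1) (k+1) B A)
        ≤ 2 * ((∑ k ∈ Ico 1 n, ov (n+1) k A A) + (∑ k ∈ Ico 1 n, ov (n+1) k B B)) := by
      calc ∑ k ∈ Ico 1 n, (ov (n+1) (k+1) A B + ov (n+1) (k+1) B A)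
          ≤ ∑ k ∈ Ico 1 n, 2 * (ov (n+1) k A A + ov (n+1) k B B) := Finset.sum_le_sum htw
        _ = _ := by rw [← Finset.mul_sum, Finset.sum_add_distrib]
    -- reindex : relate to the original sums
    have hre : ∑ k ∈ Ico 1 n, (ov (n+1) (k+1) A B + ov (n+1) (k+1) B A)
        = ∑ k ∈ Ico 2 (n+1), (ov (n+1) k A B + ov (n+1) k B A) := by
      have h := Finset.sum_Ico_add' (fun k => ov (n+1) k A B + ov (n+1) k B A) 1 n 1
      rw [h]
      all_goals (congr 1 <;> omega)
    have hbot : ∑ k ∈ Ico 1 (n+1), (ov (n+1) k A B + ov (n+1) k B A)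
        = (ov (n+1) 1 A B + ov (n+1) 1 B A)
          + ∑ k ∈ Ico 2 (n+1), (ov (n+1) k A B + ov (n+1) k B A) :=
      Finset.sum_eq_sum_Ico_succ_bot (by omega) _
    have hdist : ∑ k ∈ Ico 1 (n+1), (ov (n+1) k A B + ov (n+1) k B A)
        = (∑ k ∈ Ico 1 (n+1), ov (n+1) k A B) + (∑ k ∈ Ico 1 (n+1), ov (n+1) k B A) :=
      Finset.sum_add_distrib
    have hEQ1 : ∑ k ∈ Ico 1 (n+1), ov (n+1) k A B
        = (∑ k ∈ Ico 1 n, ov (n+1) k A B) + 2 ^ n := by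
      rw [Finset.sum_Ico_succ_top hn, show ov (n+1) n A B = 2 ^ n from if_pos hET]
    have hEQ2 : ∑ k ∈ Ico 1 (n+1), ov (n+1) k B A
        = (∑ k ∈ Ico 1 n, ov (n+1) k B A) + 2 ^ n := by
      rw [Finset.sum_Ico_succ_top hn, show ov (n+1) n B A = 2 ^ n from if_pos hFT]
    have hSE := sum_ov_le (ℓ := n+1) hn A B
    have hSF := sum_ov_le (ℓ := n+1) hn B A
    have hE1 : ov (n+1) 1 A B ≤ 2 := by have := ov_le (n+1) 1 A B; simpa using this
    have hF1 : ov (n+1) 1 B A ≤ 2 := by have := ov_le (n+1) 1 B A; simpa using this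
    have hCtop := ov_le (n+1) n A A
    have hDtop := ov_le (n+1) n B B
    -- extract equalities
    have hSEeq : (∑ k ∈ Ico 1 n, ov (n+1) k A B) + 2 = 2 ^ n := by omega
    have hSFeq : (∑ k ∈ Ico 1 n, ov (n+1) k B A) + 2 = 2 ^ n := by omega
    have he_all := all_of_sum hn A B hSEeq
    have hf_all := all_of_sum hn B A hSFeq
    -- word structure : A = B , contradiction
    have hP1 := chainP1 hn2 hET (he_all (n-1) (by omega) (by omega))
    have hA0 : A ⟨0, by omega⟩ = A ⟨1, by omega⟩ := by
      have h1 := hF 0 (by omega)  -- B ⟨1⟩ = A ⟨0⟩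
      have h2 := hE 1 (by omega)  -- A ⟨2⟩ = B ⟨1⟩
      have h3 := hP1 2 (by omega) (by omega)
      rw [← h1, ← h2, h3]
    have hf1 : OverlapAt (n+1) 1 B A := hf_all 1 le_rfl (by omega)
    have hBn : B ⟨n, by omega⟩ = A ⟨0, by omega⟩ := by
      have h := hf1 0 (by omega) (by omega)
      calc B ⟨n, by omega⟩ = B ⟨n + 1 - 1 + 0, by omega⟩ := finA B _ _ (by omega)
        _ = A ⟨0, by omega⟩ := h
    apply hAB
    funext i
    rcases i with ⟨j, hj⟩
    have hAj : A ⟨j, hj⟩ = A ⟨1, by omega⟩ := by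
      rcases Nat.eq_zero_or_pos j with h | h
      · calc A ⟨j, hj⟩ = A ⟨0, by omega⟩ := finA A _ _ h
          _ = A ⟨1, by omega⟩ := hA0
      · exact hP1 j h hj
    have hBj : B ⟨j, hj⟩ = A ⟨1, by omega⟩ := by
      by_cases hjn : j < n
      · calc B ⟨j, hj⟩ = B ⟨j, by omega⟩ := finA B _ _ rfl
          _ = A ⟨j + 1, by omega⟩ := (hE j hjn).symm
          _ = A ⟨1, by omega⟩ := hP1 (j+1) (by omega) (by omega)
      · have hjn' : j = n := by omega
        calc B ⟨j, hj⟩ = B ⟨n, by omega⟩ := finA B _ _ hjn'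
          _ = A ⟨0, by omega⟩ := hBn
          _ = A ⟨1, by omega⟩ := hA0
    rw [hAj, hBj]

end Statement17Aux

open Statement17Aux Finset

/-- Over the binary alphabet `Bool` (with `H = false`, `T = true`), if distinct words
`A ≠ B` of length `ℓ ≥ 2` satisfy `1 + θ_AA − θ_AB − θ_BA + θ_BB = 0`, then up to swapping
`A` with `B` and swapping `H` with `T`, one has `A = H T^{ℓ−1}` and `B = T^{ℓ−1} H`. -/
theorem statement17 (ℓ : ℕ) (hℓ : 2 ≤ ℓ) (A B : Fin ℓ → Bool) (hAB : A ≠ B)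
    (h : 1 + theta 2 ℓ A A - theta 2 ℓ A B - theta 2 ℓ B A + theta 2 ℓ B B = 0) :
    (A = (fun i : Fin ℓ => decide ((i : ℕ) ≠ 0)) ∧ B = (fun i : Fin ℓ => decide ((i : ℕ) ≠ ℓ - 1))) ∨
    (B = (fun i : Fin ℓ => decide ((i : ℕ) ≠ 0)) ∧ A = (fun i : Fin ℓ => decide ((i : ℕ) ≠ ℓ - 1))) ∨
    (A = (fun i : Fin ℓ => decide ((i : ℕ) = 0)) ∧ B = (fun i : Fin ℓ => decide ((i : ℕ) = ℓ - 1))) ∨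
    (B = (fun i : Fin ℓ => decide ((i : ℕ) = 0)) ∧ A = (fun i : Fin ℓ => decide ((i : ℕ) = ℓ - 1))) := by
  classical
  obtain ⟨n, hn, rfl⟩ : ∃ n, 1 ≤ n ∧ ℓ = n + 1 := ⟨ℓ - 1, by omega, by omega⟩
  have hsub : n + 1 - 1 = n := by omega
  rw [hsub]
  -- convert the real hypothesis into a natural-number equation
  rw [theta_eq, theta_eq, theta_eq, theta_eq] at h
  have hpos : (0:ℝ) < 2 ^ (n+1) := by positivity
  have hr : ((∑ k ∈ Ico 1 (n+1), ov (n+1) k A B : ℕ) : ℝ)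
      + ((∑ k ∈ Ico 1 (n+1), ov (n+1) k B A : ℕ) : ℝ)
      = 2 ^ (n+1) + ((∑ k ∈ Ico 1 (n+1), ov (n+1) k A A : ℕ) : ℝ)
        + ((∑ k ∈ Ico 1 (n+1), ov (n+1) k B B : ℕ) : ℝ) := by
    field_simp at h
    rw [mul_zero] at h
    push_cast at h ⊢
    linarith
  have hstar : (∑ k ∈ Ico 1 (n+1), ov (n+1) k A B) + (∑ k ∈ Ico 1 (n+1), ov (n+1) k B A)
      = 2 ^ (n+1) + (∑ k ∈ Ico 1 (n+1), ov (n+1) k A A)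
        + (∑ k ∈ Ico 1 (n+1), ov (n+1) k B B) := by
    exact_mod_cast hr
  have hstar' : (∑ k ∈ Ico 1 (n+1), ov (n+1) k B A) + (∑ k ∈ Ico 1 (n+1), ov (n+1) k A B)
      = 2 ^ (n+1) + (∑ k ∈ Ico 1 (n+1), ov (n+1) k B B)
        + (∑ k ∈ Ico 1 (n+1), ov (n+1) k A A) := by omega
  by_cases hET : OverlapAt (n+1) n A B <;> by_cases hFT : OverlapAt (n+1) n B A
  · rcases caseI n hn A B hAB hstar hET hFT with ⟨h1, h2⟩ | ⟨h1, h2⟩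
    · exact Or.inl ⟨h1, h2⟩
    · exact Or.inr (Or.inr (Or.inl ⟨h1, h2⟩))
  · rcases caseII n hn A B hAB hstar hET hFT with ⟨h1, h2⟩ | ⟨h1, h2⟩
    · exact Or.inl ⟨h1, h2⟩
    · exact Or.inr (Or.inr (Or.inl ⟨h1, h2⟩))
  · rcases caseII n hn B A (Ne.symm hAB) hstar' hFT hET with ⟨h1, h2⟩ | ⟨h1, h2⟩
    · exact Or.inr (Or.inl ⟨h1, h2⟩)
    · exact Or.inr (Or.inr (Or.inr ⟨h1, h2⟩))
  · -- no top overlap at all : contradiction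
    exfalso
    rw [Finset.sum_Ico_succ_top hn, Finset.sum_Ico_succ_top hn,
      Finset.sum_Ico_succ_top hn, Finset.sum_Ico_succ_top hn] at hstar
    rw [show ov (n+1) n A B = 0 from if_neg hET,
      show ov (n+1) n B A = 0 from if_neg hFT] at hstar
    have hpow : (2:ℕ) ^ (n+1) = 2 * 2 ^ n := by rw [pow_succ]; ring
    have hSE := sum_ov_le (ℓ := n+1) hn A B
    have hSF := sum_ov_le (ℓ := n+1) hn B A
    omega
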